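/- Let D be a t-(v,k,λ) design with t ≥ 1 whose block set B is an independent set in Welter's game Γ_{v,k}. For 0 ≤ i ≤ k let a_i(D) be the number of k-subsets P of [v] not in B with exactly i out-neighbors in B. Then Σ_{i=0}^{k} i·a_i(D) = λ₀·k·(v−k)/2, where λ₀ is the number of blocks. -/

import Mathlib

/-- The edge relation of Welter's game: there is an edge from `P` to `P^{(p q)}`
whenever `p ∈ P`, `q ∉ P`, `q < p`. -/
def welterEdge (P Q : Finset ℕ) : Prop :=
  ∃ p ∈ P, ∃ q, q ∉ P ∧ q < p ∧ Q = insert q (P.erase p)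

/-- The vertex set of Welter's game `Γ_{v,k}`: the `k`-element subsets of `{0, ..., v-1}`. -/
def welterVertex (v k : ℕ) : Set (Finset ℕ) :=
  {P | P ⊆ Finset.range v ∧ P.card = k}

/-- The edge relation of Welter's game `Γ_{v,k}`. -/
def welterRel (v k : ℕ) : Finset ℕ → Finset ℕ → Prop :=
  fun P Q => P ∈ welterVertex v k ∧ Q ∈ welterVertex v k ∧ welterEdge P Q

/-- A `t`-`(v, k, lam)` design with point set `{0, ..., v-1}` and block set `𝔅`:
every block is a `k`-subset of `{0, ..., v-1}` and every `t`-subset of `{0, ..., v-1}`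
is contained in exactly `lam` blocks. -/
def IsDesign (v t k lam : ℕ) (𝔅 : Finset (Finset ℕ)) : Prop :=
  (∀ b ∈ 𝔅, b ⊆ Finset.range v ∧ b.card = k) ∧
  ∀ T : Finset ℕ, T ⊆ Finset.range v → T.card = t →
    (𝔅.filter fun b => T ⊆ b).card = lam

/-- A Steiner system `S(t, k, v)` with point set `{0, ..., v-1}`. -/
def IsSteiner (v t k : ℕ) (𝔅 : Finset (Finset ℕ)) : Prop :=
  IsDesign v t k 1 𝔅

/-- `a_i(D)`: the number of `k`-subsets of `{0, ..., v-1}` that are not blocks and have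
exactly `i` out-neighbors among the blocks in Welter's game `Γ_{v,k}`. -/
noncomputable def aCount (v k : ℕ) (𝔅 : Finset (Finset ℕ)) (i : ℕ) : ℕ :=
  Set.ncard {P | P ∈ welterVertex v k ∧ P ∉ 𝔅 ∧
    Set.ncard {b | b ∈ 𝔅 ∧ welterRel v k P b} = i}

open Finset
open scoped Classical

section helpers

lemma sum_over_blocks (v : ℕ) (𝔅 : Finset (Finset ℕ))
    (hB : ∀ b ∈ 𝔅, b ⊆ Finset.range v) (g : ℕ → ℕ) :
    ∑ b ∈ 𝔅, ∑ x ∈ b, g x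
      = ∑ x ∈ Finset.range v, (𝔅.filter (fun b => x ∈ b)).card * g x := by
  have h1 : ∀ b ∈ 𝔅, ∑ x ∈ b, g x = ∑ x ∈ Finset.range v, if x ∈ b then g x else 0 := by
    intro b hb
    rw [Finset.sum_ite_mem, Finset.inter_eq_right.mpr (hB b hb)]
  rw [Finset.sum_congr rfl h1, Finset.sum_comm]
  refine Finset.sum_congr rfl fun x _ => ?_
  rw [← Finset.sum_filter, Finset.sum_const, smul_eq_mul]

lemma swap_pairs (b : Finset ℕ) :
    ((b ×ˢ b).filter (fun z : ℕ × ℕ => z.1 < z.2)).card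
      = ((b ×ˢ b).filter (fun z : ℕ × ℕ => z.2 < z.1)).card := by
  refine Finset.card_bij (fun z _ => (z.2, z.1)) ?_ ?_ ?_
  · rintro ⟨x, y⟩ hz
    simp only [mem_filter, Finset.mem_product] at hz ⊢
    exact ⟨⟨hz.1.2, hz.1.1⟩, hz.2⟩
  · rintro ⟨x₁, y₁⟩ _ ⟨x₂, y₂⟩ _ heq
    simpa [Prod.ext_iff, and_comm] using heq
  · rintro ⟨x, y⟩ hz
    simp only [mem_filter, Finset.mem_product] at hz
    exact ⟨(y, x), by simp [mem_filter, Finset.mem_product, hz.1.1, hz.1.2, hz.2], rfl⟩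

end helpers

lemma card_filter_mem_powersetCard (s : Finset ℕ) (x : ℕ) (hx : x ∈ s) (t : ℕ) (ht : 1 ≤ t) :
    ((s.powersetCard t).filter (fun T => x ∈ T)).card = (s.card - 1).choose (t - 1) := by
  rw [← Finset.card_erase_of_mem hx, ← Finset.card_powersetCard (t-1) (s.erase x)]
  refine Finset.card_bij' (fun T _ => T.erase x) (fun U _ => insert x U) ?hi ?hj ?li ?ri
  case hi =>
    intro T hT
    simp only [mem_filter, Finset.mem_powersetCard] at hT
    simp only [Finset.mem_powersetCard]
    constructor
    · intro y hy
      simp only [mem_erase] at hy ⊢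
      exact ⟨hy.1, hT.1.1 hy.2⟩
    · rw [Finset.card_erase_of_mem hT.2, hT.1.2]
  case hj =>
    intro U hU
    simp only [Finset.mem_powersetCard] at hU
    simp only [mem_filter, Finset.mem_powersetCard]
    have hxU : x ∉ U := fun hxx => (Finset.mem_erase.mp (hU.1 hxx)).1 rfl
    refine ⟨⟨?_, ?_⟩, Finset.mem_insert_self _ _⟩
    · intro y hy
      rcases Finset.mem_insert.mp hy with rfl | hy
      · exact hx
      · exact Finset.mem_of_mem_erase (hU.1 hy)
    · rw [Finset.card_insert_of_notMem hxU, hU.2, Nat.sub_add_cancel ht]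
  case li =>
    intro T hT
    simp only [mem_filter] at hT
    exact Finset.insert_erase hT.2
  case ri =>
    intro U hU
    simp only [Finset.mem_powersetCard] at hU
    have hxU : x ∉ U := fun hxx => (Finset.mem_erase.mp (hU.1 hxx)).1 rfl
    exact Finset.erase_insert hxU
lemma replication_const (v t k lam : ℕ) (𝔅 : Finset (Finset ℕ))
    (h : IsDesign v t k lam 𝔅) (ht : 1 ≤ t) (x : ℕ) (hx : x ∈ Finset.range v) :
    (𝔅.filter (fun b => x ∈ b)).card * (k - 1).choose (t - 1)
      = lam * (v - 1).choose (t - 1) := by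
  set F := ((Finset.range v).powersetCard t).filter (fun T => x ∈ T) with hF
  have h1 : ∑ T ∈ F, (𝔅.filter fun b => T ⊆ b).card = lam * (v - 1).choose (t - 1) := by
    rw [Finset.sum_congr rfl (fun T hT => ?_), Finset.sum_const, smul_eq_mul,
      hF, card_filter_mem_powersetCard _ x hx t ht, Finset.card_range, mul_comm]
    simp only [hF, mem_filter, Finset.mem_powersetCard] at hT
    exact h.2 T hT.1.1 hT.1.2
  have h2 : ∑ T ∈ F, (𝔅.filter fun b => T ⊆ b).card
      = ∑ b ∈ 𝔅, (F.filter fun T => T ⊆ b).card := by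
    simp only [Finset.card_filter]
    exact Finset.sum_comm
  have h3 : ∀ b ∈ 𝔅, (F.filter fun T => T ⊆ b).card
      = if x ∈ b then (k - 1).choose (t - 1) else 0 := by
    intro b hb
    obtain ⟨hbv, hbk⟩ := h.1 b hb
    split_ifs with hxb
    · have : F.filter (fun T => T ⊆ b) = (b.powersetCard t).filter (fun T => x ∈ T) := by
        ext T
        simp only [hF, mem_filter, Finset.mem_powersetCard]
        constructor
        · rintro ⟨⟨⟨_, hTt⟩, hxT⟩, hTb⟩
          exact ⟨⟨hTb, hTt⟩, hxT⟩
        · rintro ⟨⟨hTb, hTt⟩, hxT⟩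
          exact ⟨⟨⟨hTb.trans hbv, hTt⟩, hxT⟩, hTb⟩
      rw [this, card_filter_mem_powersetCard b x hxb t ht, hbk]
    · rw [Finset.card_eq_zero]
      ext T
      simp only [hF, mem_filter, Finset.mem_powersetCard, Finset.notMem_empty, iff_false]
      rintro ⟨⟨_, hxT⟩, hTb⟩
      exact hxb (hTb hxT)
  rw [h2, Finset.sum_congr rfl h3, Finset.sum_ite, Finset.sum_const, Finset.sum_const,
    smul_eq_mul, smul_eq_mul, mul_zero, add_zero] at h1
  exact h1
lemma indeg_eq (v k : ℕ) (hk : 1 ≤ k) (b : Finset ℕ) (hbv : b ⊆ Finset.range v)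
    (hbk : b.card = k) :
    (((Finset.range v).powersetCard k).filter (fun P => welterRel v k P b)).card
      = ((b ×ˢ (Finset.range v \ b)).filter (fun z => z.1 < z.2)).card := by
  symm
  refine Finset.card_bij (fun z _ => insert z.2 (b.erase z.1)) ?hi ?inj ?surj
  case hi =>
    rintro ⟨q, p⟩ hz
    simp only [mem_filter, Finset.mem_product, Finset.mem_sdiff] at hz
    obtain ⟨⟨hqb, hpv, hpb⟩, hqp⟩ := hz
    have hpe : p ∉ b.erase q := fun hc => hpb (Finset.mem_of_mem_erase hc)
    have hPv : insert p (b.erase q) ⊆ Finset.range v := by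
      intro y hy
      rcases Finset.mem_insert.mp hy with rfl | hy
      · exact hpv
      · exact hbv (Finset.mem_of_mem_erase hy)
    have hPk : (insert p (b.erase q)).card = k := by
      rw [Finset.card_insert_of_notMem hpe, Finset.card_erase_of_mem hqb, hbk,
        Nat.sub_add_cancel hk]
    simp only [mem_filter, Finset.mem_powersetCard]
    refine ⟨⟨hPv, hPk⟩, ⟨hPv, hPk⟩, ⟨hbv, hbk⟩, p, Finset.mem_insert_self _ _, q, ?_, hqp, ?_⟩
    · intro hc
      rcases Finset.mem_insert.mp hc with rfl | hc
      · exact absurd hqp (lt_irrefl _)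
      · exact (Finset.mem_erase.mp hc).1 rfl
    · rw [Finset.erase_insert hpe, Finset.insert_erase hqb]
  case inj =>
    rintro ⟨q₁, p₁⟩ hz₁ ⟨q₂, p₂⟩ hz₂ heq
    simp only [mem_filter, Finset.mem_product, Finset.mem_sdiff] at hz₁ hz₂
    obtain ⟨⟨hq₁b, hp₁v, hp₁b⟩, _⟩ := hz₁
    obtain ⟨⟨hq₂b, hp₂v, hp₂b⟩, _⟩ := hz₂
    simp only [] at heq
    have hp : p₁ = p₂ := by
      have h1 : p₁ ∈ insert p₂ (b.erase q₂) := by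
        rw [← heq]; exact Finset.mem_insert_self _ _
      rcases Finset.mem_insert.mp h1 with h | h
      · exact h
      · exact absurd (Finset.mem_of_mem_erase h) hp₁b
    subst hp
    have hpe₁ : p₁ ∉ b.erase q₁ := fun hc => hp₁b (Finset.mem_of_mem_erase hc)
    have hpe₂ : p₁ ∉ b.erase q₂ := fun hc => hp₁b (Finset.mem_of_mem_erase hc)
    have herase : b.erase q₁ = b.erase q₂ := by
      have := congrArg (fun s => Finset.erase s p₁) heq
      simpa [Finset.erase_insert hpe₁, Finset.erase_insert hpe₂] using this
    have : q₁ = q₂ := by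
      by_contra hne
      have : q₂ ∈ b.erase q₁ := Finset.mem_erase.mpr ⟨fun hc => hne hc.symm, hq₂b⟩
      rw [herase] at this
      exact (Finset.mem_erase.mp this).1 rfl
    simp [this]
  case surj =>
    intro P hP
    simp only [mem_filter, Finset.mem_powersetCard] at hP
    obtain ⟨⟨hPv, hPk⟩, _, _, p, hpP, q, hqP, hqp, hb⟩ := hP
    have hqb : q ∈ b := hb ▸ Finset.mem_insert_self _ _
    have hpb : p ∉ b := by
      rw [hb]
      intro hc
      rcases Finset.mem_insert.mp hc with rfl | hc
      · exact absurd hqp (lt_irrefl _)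
      · exact (Finset.mem_erase.mp hc).1 rfl
    refine ⟨(q, p), ?_, ?_⟩
    · simp only [mem_filter, Finset.mem_product, Finset.mem_sdiff]
      exact ⟨⟨hqb, hPv hpP, hpb⟩, hqp⟩
    · have hqPe : q ∉ P.erase p := fun hc => hqP (Finset.mem_of_mem_erase hc)
      show insert p (b.erase q) = P
      symm
      rw [hb, Finset.erase_insert hqPe, Finset.insert_erase hpP]
lemma in_add_out (v k : ℕ) (hkv : k ≤ v) (b : Finset ℕ) (hbv : b ⊆ Finset.range v)
    (hbk : b.card = k) :
    ((b ×ˢ (Finset.range v \ b)).filter (fun z => z.1 < z.2)).card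
      + ((b ×ˢ (Finset.range v \ b)).filter (fun z => z.2 < z.1)).card = k * (v - k) := by
  have hcard : (b ×ˢ (Finset.range v \ b)).card = k * (v - k) := by
    rw [Finset.card_product, Finset.card_sdiff_of_subset hbv, Finset.card_range, hbk]
  have hsplit := Finset.card_filter_add_card_filter_not
    (s := b ×ˢ (Finset.range v \ b)) (p := fun z => z.1 < z.2)
  have hco : (b ×ˢ (Finset.range v \ b)).filter (fun z => ¬ z.1 < z.2)
      = (b ×ˢ (Finset.range v \ b)).filter (fun z => z.2 < z.1) := by
    apply Finset.filter_congr
    rintro ⟨x, y⟩ hz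
    simp only [Finset.mem_product, Finset.mem_sdiff] at hz
    have hne : y ≠ x := fun hc => hz.2.2 (hc ▸ hz.1)
    simp only [not_lt, eq_iff_iff]
    constructor
    · intro hle; exact lt_of_le_of_ne hle hne
    · intro hlt; exact le_of_lt hlt
  rw [hco] at hsplit
  omega

lemma welter_sdiff {P b : Finset ℕ} {p q : ℕ} (hpP : p ∈ P) (hqP : q ∉ P)
    (hqp : q < p) (hb : b = insert q (P.erase p)) : P \ b = {p} := by
  ext x
  simp only [Finset.mem_sdiff, Finset.mem_singleton, hb, Finset.mem_insert, Finset.mem_erase,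
    not_or, not_and]
  constructor
  · rintro ⟨hxP, hxq, hx⟩
    by_contra hxp
    exact (hx hxp) hxP
  · rintro rfl
    exact ⟨hpP, fun hc => absurd hqp (hc ▸ lt_irrefl _), fun hc => absurd hc (not_not_intro rfl)⟩

lemma f_le_k (v k : ℕ) (𝔅 : Finset (Finset ℕ))
    (hind : ∀ b₁ ∈ 𝔅, ∀ b₂ ∈ 𝔅, ¬ welterRel v k b₁ b₂)
    (P : Finset ℕ) (hPk : P.card = k) :
    (𝔅.filter (fun b => welterRel v k P b)).card ≤ k := by
  suffices hle : (𝔅.filter (fun b => welterRel v k P b)).card ≤ P.card by omega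
  apply Finset.card_le_card_of_injOn (fun b => (P \ b).sup id)
  · intro b hb
    simp only [Finset.mem_coe, mem_filter] at hb
    obtain ⟨hb𝔅, _, _, p, hpP, q, hqP, hqp, hbeq⟩ := hb
    beta_reduce
    rw [welter_sdiff hpP hqP hqp hbeq]
    simpa using hpP
  · intro b₁ hb₁ b₂ hb₂ heq
    simp only [Finset.coe_filter, Set.mem_setOf_eq] at hb₁ hb₂
    obtain ⟨hb₁𝔅, hr₁⟩ := hb₁
    obtain ⟨hb₂𝔅, hr₂⟩ := hb₂
    obtain ⟨hPV, hbV₁, p₁, hp₁P, q₁, hq₁P, hq₁p, hbeq₁⟩ := hr₁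
    obtain ⟨_, hbV₂, p₂, hp₂P, q₂, hq₂P, hq₂p, hbeq₂⟩ := hr₂
    simp only [welter_sdiff hp₁P hq₁P hq₁p hbeq₁, welter_sdiff hp₂P hq₂P hq₂p hbeq₂,
      Finset.sup_singleton, id] at heq
    subst heq
    by_contra hne
    have hq : q₁ ≠ q₂ := by
      intro hc
      rw [hbeq₁, hbeq₂, hc] at hne
      exact hne rfl
    have key : ∀ (qa qb : ℕ), qa ∉ P → qb ∉ P → qb < qa → qa < p₁ →
        welterEdge (insert qa (P.erase p₁)) (insert qb (P.erase p₁)) := by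
      intro qa qb haP hbP hba hap
      have haE : qa ∉ P.erase p₁ := fun hc => haP (Finset.mem_of_mem_erase hc)
      refine ⟨qa, Finset.mem_insert_self _ _, qb, ?_, hba, ?_⟩
      · intro hc
        rcases Finset.mem_insert.mp hc with rfl | hc
        · exact absurd hba (lt_irrefl _)
        · exact hbP (Finset.mem_of_mem_erase hc)
      · rw [Finset.erase_insert haE]
    rcases lt_or_gt_of_ne hq with hlt | hlt
    · exact hind b₂ hb₂𝔅 b₁ hb₁𝔅 ⟨hbV₂, hbV₁, hbeq₂ ▸ hbeq₁ ▸ key q₂ q₁ hq₂P hq₁P hlt hq₂p⟩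
    · exact hind b₁ hb₁𝔅 b₂ hb₂𝔅 ⟨hbV₁, hbV₂, hbeq₁ ▸ hbeq₂ ▸ key q₁ q₂ hq₁P hq₂P hlt hq₁p⟩

lemma card_filter_product (s t : Finset ℕ) (p : ℕ → ℕ → Prop) :
    ((s ×ˢ t).filter (fun z => p z.1 z.2)).card
      = ∑ x ∈ s, (t.filter (fun y => p x y)).card := by
  simp only [Finset.card_filter]
  rw [Finset.sum_product]

lemma card_filter_split (v : ℕ) (b : Finset ℕ) (hb : b ⊆ Finset.range v) (p : ℕ → Prop) [DecidablePred p] :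
    ((Finset.range v \ b).filter p).card + (b.filter p).card
      = ((Finset.range v).filter p).card := by
  rw [← Finset.card_union_of_disjoint (Finset.disjoint_filter_filter sdiff_disjoint),
    ← Finset.filter_union, Finset.sdiff_union_of_subset hb]

lemma range_filter_gt (v x : ℕ) :
    ((Finset.range v).filter (fun y => x < y)).card = v - (x + 1) := by
  have : (Finset.range v).filter (fun y => x < y) = Finset.Ico (x + 1) v := by
    ext y
    simp only [Finset.mem_filter, Finset.mem_range, Finset.mem_Ico]
    omega
  rw [this, Nat.card_Ico]

lemma range_filter_lt (v x : ℕ) (hx : x < v) :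
    ((Finset.range v).filter (fun y => y < x)).card = x := by
  have : (Finset.range v).filter (fun y => y < x) = Finset.range x := by
    ext y
    simp only [Finset.mem_filter, Finset.mem_range]
    omega
  rw [this, Finset.card_range]

lemma card_filter_product_lt (s t : Finset ℕ) :
    ((s ×ˢ t).filter (fun z => z.1 < z.2)).card
      = ∑ x ∈ s, (t.filter (fun y => x < y)).card := by
  simp only [Finset.card_filter]
  rw [Finset.sum_product]

lemma card_filter_product_gt (s t : Finset ℕ) :
    ((s ×ˢ t).filter (fun z => z.2 < z.1)).card
      = ∑ x ∈ s, (t.filter (fun y => y < x)).card := by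
  simp only [Finset.card_filter]
  rw [Finset.sum_product]

/-- For a `t`-`(v, k, λ)` design with `t ≥ 1` whose block set is an independent set in
Welter's game `Γ_{v,k}`, `Σ_{i=0}^{k} i · a_i(D) = λ₀ k (v - k) / 2`, where
`λ₀ = 𝔅.card` is the number of blocks (stated multiplied through by 2). -/
theorem stmt_9 (v t k lam : ℕ) (𝔅 : Finset (Finset ℕ))
    (h : IsDesign v t k lam 𝔅) (ht : 1 ≤ t) (htk : t ≤ k) (hkv : k ≤ v)
    (hind : ∀ b₁ ∈ 𝔅, ∀ b₂ ∈ 𝔅, ¬ welterRel v k b₁ b₂) :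
    2 * ∑ i ∈ Finset.range (k + 1), i * aCount v k 𝔅 i = 𝔅.card * k * (v - k) := by
  classical
  have hk : 1 ≤ k := ht.trans htk
  set V : Finset (Finset ℕ) := (Finset.range v).powersetCard k with hV
  set f : Finset ℕ → ℕ := fun P => (𝔅.filter (fun b => welterRel v k P b)).card with hfdef
  -- `aCount` as a `Finset` cardinality
  have haCount : ∀ i, aCount v k 𝔅 i = (V.filter (fun P => P ∉ 𝔅 ∧ f P = i)).card := by
    intro i
    have hs : ∀ P : Finset ℕ, {b | b ∈ 𝔅 ∧ welterRel v k P b}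
        = ↑(𝔅.filter (fun b => welterRel v k P b)) := by
      intro P; ext b; simp
    have hset : {P | P ∈ welterVertex v k ∧ P ∉ 𝔅 ∧
        Set.ncard {b | b ∈ 𝔅 ∧ welterRel v k P b} = i}
        = ↑(V.filter (fun P => P ∉ 𝔅 ∧ f P = i)) := by
      ext P
      rw [Set.mem_setOf_eq, hs P, Set.ncard_coe_finset, Finset.mem_coe,
        Finset.mem_filter, hV, Finset.mem_powersetCard]
      exact Iff.rfl
    rw [aCount, hset, Set.ncard_coe_finset]
  -- Step A1: the weighted sum counts edges from non-blocks into blocks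
  have hA1 : ∑ i ∈ Finset.range (k + 1), i * aCount v k 𝔅 i
      = ∑ P ∈ V.filter (fun P => P ∉ 𝔅), f P := by
    rw [← Finset.sum_fiberwise_of_maps_to (g := f) (t := Finset.range (k + 1)) ?mapsto f]
    case mapsto =>
      intro P hP
      simp only [Finset.mem_filter, hV, Finset.mem_powersetCard] at hP
      exact Finset.mem_range.mpr (Nat.lt_succ_of_le (f_le_k v k 𝔅 hind P hP.1.2))
    refine Finset.sum_congr rfl fun i _ => ?_
    have hff : (V.filter (fun P => P ∉ 𝔅)).filter (fun P => f P = i)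
        = V.filter (fun P => P ∉ 𝔅 ∧ f P = i) := Finset.filter_filter _ _ _
    rw [haCount i, ← hff]
    rw [Finset.sum_congr rfl (fun P hP => ((Finset.mem_filter.mp hP).2 : f P = i)),
      Finset.sum_const, smul_eq_mul, hff, mul_comm]
  -- Step A2: blocks contribute zero
  have hA2 : ∑ P ∈ V.filter (fun P => P ∉ 𝔅), f P = ∑ P ∈ V, f P := by
    rw [← Finset.sum_filter_add_sum_filter_not V (fun P => P ∉ 𝔅) f]
    have hz : ∀ P ∈ V.filter (fun P => ¬ P ∉ 𝔅), f P = 0 := by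
      intro P hP
      simp only [Finset.mem_filter, not_not] at hP
      simp only [hfdef, Finset.card_eq_zero, Finset.filter_eq_empty_iff]
      intro b hb
      exact hind P hP.2 b hb
    rw [Finset.sum_congr rfl hz, Finset.sum_const_zero, add_zero]
  -- Step A3: exchange the order of counting
  have hA3 : ∑ P ∈ V, f P = ∑ b ∈ 𝔅, (V.filter (fun P => welterRel v k P b)).card := by
    simp only [hfdef, Finset.card_filter]
    exact Finset.sum_comm
  -- Step A4: the in-degree of a block as a pair count
  have hA4 : ∑ b ∈ 𝔅, (V.filter (fun P => welterRel v k P b)).card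
      = ∑ b ∈ 𝔅, ((b ×ˢ (Finset.range v \ b)).filter (fun z => z.1 < z.2)).card :=
    Finset.sum_congr rfl fun b hb => indeg_eq v k hk b (h.1 b hb).1 (h.1 b hb).2
  -- abbreviations
  set In : Finset ℕ → ℕ :=
    fun b => ((b ×ˢ (Finset.range v \ b)).filter (fun z => z.1 < z.2)).card with hIn
  set Out : Finset ℕ → ℕ :=
    fun b => ((b ×ˢ (Finset.range v \ b)).filter (fun z => z.2 < z.1)).card with hOut
  set Wlt : Finset ℕ → ℕ :=
    fun b => ((b ×ˢ b).filter (fun z : ℕ × ℕ => z.1 < z.2)).card with hWlt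
  set Wgt : Finset ℕ → ℕ :=
    fun b => ((b ×ˢ b).filter (fun z : ℕ × ℕ => z.2 < z.1)).card with hWgt
  -- per-block identities
  have hIW : ∀ b ∈ 𝔅, In b + Wlt b = ∑ x ∈ b, (v - (x + 1)) := by
    intro b hb
    simp only [hIn, hWlt]
    rw [card_filter_product_lt, card_filter_product_lt, ← Finset.sum_add_distrib]
    refine Finset.sum_congr rfl fun x _ => ?_
    rw [card_filter_split v b (h.1 b hb).1 (fun y => x < y), range_filter_gt]
  have hOW : ∀ b ∈ 𝔅, Out b + Wgt b = ∑ x ∈ b, x := by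
    intro b hb
    simp only [hOut, hWgt]
    rw [card_filter_product_gt, card_filter_product_gt, ← Finset.sum_add_distrib]
    refine Finset.sum_congr rfl fun x hx => ?_
    rw [card_filter_split v b (h.1 b hb).1 (fun y => y < x),
      range_filter_lt v x (Finset.mem_range.mp ((h.1 b hb).1 hx))]
  -- the balance: total in-degree equals total out-degree
  have hbal : ∑ b ∈ 𝔅, In b = ∑ b ∈ 𝔅, Out b := by
    have hC : 0 < (k - 1).choose (t - 1) := Nat.choose_pos (by omega)
    have hmul : ∀ g : ℕ → ℕ, (∑ b ∈ 𝔅, ∑ x ∈ b, g x) * (k - 1).choose (t - 1)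
        = lam * (v - 1).choose (t - 1) * ∑ x ∈ Finset.range v, g x := by
      intro g
      rw [sum_over_blocks v 𝔅 (fun b hb => (h.1 b hb).1) g, Finset.sum_mul,
        Finset.mul_sum]
      refine Finset.sum_congr rfl fun x hx => ?_
      rw [mul_right_comm, replication_const v t k lam 𝔅 h ht x hx]
    have hsum_eq : ∑ x ∈ Finset.range v, (v - (x + 1)) = ∑ x ∈ Finset.range v, x := by
      calc ∑ x ∈ Finset.range v, (v - (x + 1))
          = ∑ x ∈ Finset.range v, (v - 1 - x) :=
            Finset.sum_congr rfl fun x _ => by omega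
        _ = ∑ x ∈ Finset.range v, x := Finset.sum_range_reflect (fun i => i) v
    have h1 : (∑ b ∈ 𝔅, (In b + Wlt b)) * (k - 1).choose (t - 1)
        = (∑ b ∈ 𝔅, (Out b + Wgt b)) * (k - 1).choose (t - 1) := by
      rw [Finset.sum_congr rfl hIW, Finset.sum_congr rfl hOW, hmul, hmul, hsum_eq]
    have h2 : ∑ b ∈ 𝔅, (In b + Wlt b) = ∑ b ∈ 𝔅, (Out b + Wgt b) :=
      Nat.eq_of_mul_eq_mul_right hC h1
    have h3 : ∑ b ∈ 𝔅, Wlt b = ∑ b ∈ 𝔅, Wgt b :=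
      Finset.sum_congr rfl fun b _ => swap_pairs b
    rw [Finset.sum_add_distrib, Finset.sum_add_distrib] at h2
    omega
  -- total degree of each block
  have hdeg : ∑ b ∈ 𝔅, (In b + Out b) = 𝔅.card * (k * (v - k)) := by
    rw [Finset.sum_congr rfl
      (fun b hb => in_add_out v k hkv b (h.1 b hb).1 (h.1 b hb).2),
      Finset.sum_const, smul_eq_mul]
  rw [hA1, hA2, hA3, hA4]
  rw [Finset.sum_add_distrib] at hdeg
  rw [mul_assoc]
  have heta : 𝔅.sum In = ∑ b ∈ 𝔅, In b := rfl
  rw [heta]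
  omega
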